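/- arXiv:1811.12172 — 2 statements merged into one kernel-verified Lean document; each statement's English description precedes it below -/
import Mathlib

section
/- Let $A_+^1,\ldots,A_+^K$ be symmetric positive semidefinite $n\times n$ matrices and $\Lambda^1,\ldots,\Lambda^K$ diagonal $d\times d$ matrices with nonnegative entries. Let $U^{\mathrm{old}}$ be an $n\times d$ matrix with orthonormal columns, and let $U^{\mathrm{new}} = BC^T$ where $B\Sigma C^T$ is a singular value decomposition of $M = \sum_{k=1}^K A_+^k U^{\mathrm{old}} \Lambda^k$ (with $B$ $n\times d$ having orthonormal columns, $C$ $d\times d$ orthogonal). Then $\sum_{k=1}^K \|A_+^k - U^{\mathrm{new}}\Lambda^k (U^{\mathrm{new}})^T\|_F^2 \le \sum_{k=1}^K \|A_+^k - U^{\mathrm{old}}\Lambda^k (U^{\mathrm{old}})^T\|_F^2$. -/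
open Matrix

noncomputable def frobSq {n d : ℕ} (M : Matrix (Fin n) (Fin d) ℝ) : ℝ :=
  Matrix.trace (Mᵀ * M)

section Aux

variable {n d : ℕ}

lemma psd_diag_entry_nonneg {m : ℕ} {X : Matrix (Fin m) (Fin m) ℝ}
    (hX : X.PosSemidef) (j : Fin m) : 0 ≤ X j j := by
  have := hX.dotProduct_mulVec_nonneg (Pi.single j 1)
  simpa [dotProduct, mulVec, Pi.single_apply, Finset.sum_ite_eq, Finset.sum_ite_eq'] using this

lemma trace_psd_diag_nonneg {A : Matrix (Fin n) (Fin n) ℝ} (hA : A.PosSemidef)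
    (V : Matrix (Fin n) (Fin d) ℝ) {lam : Fin d → ℝ} (hlam : ∀ j, 0 ≤ lam j) :
    0 ≤ Matrix.trace (Vᵀ * A * V * Matrix.diagonal lam) := by
  have h1 : (Vᵀ * A * V).PosSemidef := by
    have := hA.conjTranspose_mul_mul_same V
    simpa using this
  rw [Matrix.trace]
  have : ∀ j, (Vᵀ * A * V * Matrix.diagonal lam).diag j = (Vᵀ * A * V) j j * lam j := by
    intro j; simp [Matrix.diag, Matrix.mul_diagonal]
  rw [Finset.sum_congr rfl fun j _ => this j]
  exact Finset.sum_nonneg fun j _ =>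
    mul_nonneg (psd_diag_entry_nonneg h1 j) (hlam j)

lemma expand_frobSq (A : Matrix (Fin n) (Fin n) ℝ) (hA : Aᵀ = A)
    (U : Matrix (Fin n) (Fin d) ℝ) (hU : Uᵀ * U = 1) (lam : Fin d → ℝ) :
    frobSq (A - U * Matrix.diagonal lam * Uᵀ) =
      Matrix.trace (Aᵀ * A) - 2 * Matrix.trace (Uᵀ * A * U * Matrix.diagonal lam)
        + Matrix.trace (Matrix.diagonal lam * Matrix.diagonal lam) := by
  unfold frobSq
  set D := Matrix.diagonal lam with hD
  have hDt : Dᵀ = D := Matrix.diagonal_transpose lam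
  have e1 : Matrix.trace (Aᵀ * (U * D * Uᵀ)) = Matrix.trace (Uᵀ * A * U * D) := by
    rw [hA, ← Matrix.mul_assoc, ← Matrix.mul_assoc, trace_mul_cycle]
    simp only [Matrix.mul_assoc]
  have e2 : Matrix.trace ((U * D * Uᵀ)ᵀ * A) = Matrix.trace (Uᵀ * A * U * D) := by
    rw [transpose_mul, transpose_mul, transpose_transpose, hDt]
    rw [Matrix.mul_assoc, Matrix.mul_assoc, trace_mul_cycle']
    simp only [Matrix.mul_assoc]
  have e3 : Matrix.trace ((U * D * Uᵀ)ᵀ * (U * D * Uᵀ)) = Matrix.trace (D * D) := by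
    have h1 : (U * D * Uᵀ)ᵀ = U * D * Uᵀ := by
      simp only [transpose_mul, transpose_transpose, hDt, Matrix.mul_assoc]
    have h2 : U * D * Uᵀ * (U * D * Uᵀ) = U * (D * D) * Uᵀ := by
      calc U * D * Uᵀ * (U * D * Uᵀ) = U * D * (Uᵀ * U) * (D * Uᵀ) := by
            simp only [Matrix.mul_assoc]
        _ = U * (D * D) * Uᵀ := by rw [hU]; simp only [Matrix.mul_one, Matrix.mul_assoc]
    rw [h1, h2, trace_mul_cycle, hU, Matrix.one_mul]
  rw [transpose_sub, sub_mul, mul_sub, mul_sub, trace_sub, trace_sub, trace_sub, e1]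
  rw [e2, e3]
  ring

lemma key_convexity {A : Matrix (Fin n) (Fin n) ℝ} (hA : A.PosSemidef)
    (U V : Matrix (Fin n) (Fin d) ℝ) {lam : Fin d → ℝ} (hlam : ∀ j, 0 ≤ lam j) :
    Matrix.trace (Uᵀ * A * U * Matrix.diagonal lam)
      + 2 * Matrix.trace ((V - U)ᵀ * (A * U * Matrix.diagonal lam))
      ≤ Matrix.trace (Vᵀ * A * V * Matrix.diagonal lam) := by
  set D := Matrix.diagonal lam with hD
  have hAs : Aᵀ = A := hA.isHermitian
  have hnn : 0 ≤ Matrix.trace ((V - U)ᵀ * A * (V - U) * D) :=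
    trace_psd_diag_nonneg hA (V - U) hlam
  have hDt : Dᵀ = D := by rw [hD]; exact Matrix.diagonal_transpose lam
  have cross : Matrix.trace (Uᵀ * A * V * D) = Matrix.trace (Vᵀ * A * U * D) := by
    have h1 : (Uᵀ * A * V * D)ᵀ = D * (Vᵀ * (A * U)) := by
      simp only [transpose_mul, transpose_transpose, hAs, hDt, Matrix.mul_assoc]
    rw [← trace_transpose (Uᵀ * A * V * D), h1, trace_mul_comm]
    simp only [Matrix.mul_assoc]
  have expand : Matrix.trace ((V - U)ᵀ * A * (V - U) * D)
      = Matrix.trace (Vᵀ * A * V * D) - Matrix.trace (Uᵀ * A * U * D)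
        - 2 * Matrix.trace ((V - U)ᵀ * (A * U * D)) := by
    have hsub : (V - U)ᵀ = Vᵀ - Uᵀ := transpose_sub V U
    simp only [hsub, Matrix.sub_mul, Matrix.mul_sub, trace_sub]
    have c2 : Matrix.trace (Uᵀ * (A * U * D)) = Matrix.trace (Uᵀ * A * U * D) := by
      simp only [Matrix.mul_assoc]
    have c3 : Matrix.trace (Vᵀ * (A * U * D)) = Matrix.trace (Vᵀ * A * U * D) := by
      simp only [Matrix.mul_assoc]
    have c4 : Matrix.trace (Uᵀ * A * V * D) = Matrix.trace (Vᵀ * A * U * D) := cross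
    simp only [Matrix.mul_assoc] at *
    rw [c4]
    ring
  linarith [hnn, expand.symm.le]

end Aux

theorem stmt_3 (n d K : ℕ)
    (A : Fin K → Matrix (Fin n) (Fin n) ℝ)
    (Λ : Fin K → Fin d → ℝ)
    (hA : ∀ k, (A k).PosSemidef)
    (hΛ : ∀ k j, 0 ≤ Λ k j)
    (Uold : Matrix (Fin n) (Fin d) ℝ)
    (hUold : Uoldᵀ * Uold = 1)
    (B : Matrix (Fin n) (Fin d) ℝ) (σ : Fin d → ℝ) (C : Matrix (Fin d) (Fin d) ℝ)
    (hB : Bᵀ * B = 1) (hσ : ∀ i, 0 ≤ σ i)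
    (hC : Cᵀ * C = 1) (hC' : C * Cᵀ = 1)
    (hSVD : (∑ k, A k * Uold * Matrix.diagonal (Λ k)) = B * Matrix.diagonal σ * Cᵀ)
    (Unew : Matrix (Fin n) (Fin d) ℝ)
    (hUnew : Unew = B * Cᵀ) :
    ∑ k, frobSq (A k - Unew * Matrix.diagonal (Λ k) * Unewᵀ) ≤
      ∑ k, frobSq (A k - Uold * Matrix.diagonal (Λ k) * Uoldᵀ) := by
  have hUnewOrth : Unewᵀ * Unew = 1 := by
    rw [hUnew, transpose_mul, transpose_transpose]
    calc C * Bᵀ * (B * Cᵀ) = C * (Bᵀ * B) * Cᵀ := by simp only [Matrix.mul_assoc]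
      _ = 1 := by rw [hB, Matrix.mul_one, hC']
  -- reduce to comparing the linear terms
  have hexp_old : ∀ k, frobSq (A k - Uold * Matrix.diagonal (Λ k) * Uoldᵀ) =
      Matrix.trace ((A k)ᵀ * A k)
        - 2 * Matrix.trace (Uoldᵀ * A k * Uold * Matrix.diagonal (Λ k))
        + Matrix.trace (Matrix.diagonal (Λ k) * Matrix.diagonal (Λ k)) :=
    fun k => expand_frobSq (A k) (hA k).isHermitian Uold hUold (Λ k)
  have hexp_new : ∀ k, frobSq (A k - Unew * Matrix.diagonal (Λ k) * Unewᵀ) =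
      Matrix.trace ((A k)ᵀ * A k)
        - 2 * Matrix.trace (Unewᵀ * A k * Unew * Matrix.diagonal (Λ k))
        + Matrix.trace (Matrix.diagonal (Λ k) * Matrix.diagonal (Λ k)) :=
    fun k => expand_frobSq (A k) (hA k).isHermitian Unew hUnewOrth (Λ k)
  have main : ∑ k, Matrix.trace (Uoldᵀ * A k * Uold * Matrix.diagonal (Λ k)) ≤
      ∑ k, Matrix.trace (Unewᵀ * A k * Unew * Matrix.diagonal (Λ k)) := by
    have step1 : ∀ k : Fin K,
        Matrix.trace (Uoldᵀ * A k * Uold * Matrix.diagonal (Λ k))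
          + 2 * Matrix.trace ((Unew - Uold)ᵀ * (A k * Uold * Matrix.diagonal (Λ k)))
          ≤ Matrix.trace (Unewᵀ * A k * Unew * Matrix.diagonal (Λ k)) :=
      fun k => key_convexity (hA k) Uold Unew (hΛ k)
    have sum_step : ∑ k, Matrix.trace ((Unew - Uold)ᵀ * (A k * Uold * Matrix.diagonal (Λ k)))
        = Matrix.trace ((Unew - Uold)ᵀ * (B * Matrix.diagonal σ * Cᵀ)) := by
      rw [← hSVD, Matrix.mul_sum, trace_sum]
    have tr_new : Matrix.trace (Unewᵀ * (B * Matrix.diagonal σ * Cᵀ)) = ∑ i, σ i := by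
      rw [hUnew, transpose_mul, transpose_transpose]
      have : C * Bᵀ * (B * Matrix.diagonal σ * Cᵀ) = C * Matrix.diagonal σ * Cᵀ := by
        calc C * Bᵀ * (B * Matrix.diagonal σ * Cᵀ)
            = C * (Bᵀ * B) * (Matrix.diagonal σ * Cᵀ) := by simp only [Matrix.mul_assoc]
          _ = C * Matrix.diagonal σ * Cᵀ := by rw [hB, Matrix.mul_one, Matrix.mul_assoc]
      rw [this, trace_mul_cycle, hC, Matrix.one_mul, trace_diagonal]
    have tr_old : Matrix.trace (Uoldᵀ * (B * Matrix.diagonal σ * Cᵀ)) ≤ ∑ i, σ i := by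
      have hre : Matrix.trace (Uoldᵀ * (B * Matrix.diagonal σ * Cᵀ))
          = ∑ i, (Cᵀ * Uoldᵀ * B) i i * σ i := by
        have : Uoldᵀ * (B * Matrix.diagonal σ * Cᵀ) = Uoldᵀ * B * Matrix.diagonal σ * Cᵀ := by
          simp only [Matrix.mul_assoc]
        rw [this, trace_mul_cycle, ← Matrix.mul_assoc, Matrix.trace]
        congr 1
        ext i
        simp [Matrix.diag, Matrix.mul_diagonal]
      rw [hre]
      set X := Uold * C with hX
      have hXorth : Xᵀ * X = 1 := by
        rw [hX, transpose_mul]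
        calc Cᵀ * Uoldᵀ * (Uold * C) = Cᵀ * (Uoldᵀ * Uold) * C := by simp only [Matrix.mul_assoc]
          _ = 1 := by rw [hUold, Matrix.mul_one, hC]
      have hdiag : ∀ i : Fin d, (Cᵀ * Uoldᵀ * B) i i ≤ 1 := by
        intro i
        have hXi : ∑ l, X l i ^ 2 = 1 := by
          have := congrFun (congrFun hXorth i) i
          simpa [Matrix.mul_apply, Matrix.transpose_apply, Matrix.one_apply, sq] using this
        have hBi : ∑ l, B l i ^ 2 = 1 := by
          have := congrFun (congrFun hB i) i
          simpa [Matrix.mul_apply, Matrix.transpose_apply, Matrix.one_apply, sq] using this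
        have hXB : (Cᵀ * Uoldᵀ * B) i i = ∑ l, X l i * B l i := by
          have : Cᵀ * Uoldᵀ * B = Xᵀ * B := by rw [hX, transpose_mul]
          rw [this, Matrix.mul_apply]
          simp [Matrix.transpose_apply]
        have hcs := Finset.sum_mul_sq_le_sq_mul_sq Finset.univ (fun l => X l i) (fun l => B l i)
        rw [hXi, hBi, mul_one] at hcs
        have : (∑ l, X l i * B l i) ≤ 1 := by nlinarith [sq_nonneg (∑ l, X l i * B l i)]
        rw [hXB]; exact this
      calc ∑ i, (Cᵀ * Uoldᵀ * B) i i * σ i ≤ ∑ i, 1 * σ i :=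
            Finset.sum_le_sum fun i _ => mul_le_mul_of_nonneg_right (hdiag i) (hσ i)
        _ = ∑ i, σ i := by simp
    have diff_nonneg : 0 ≤ Matrix.trace ((Unew - Uold)ᵀ * (B * Matrix.diagonal σ * Cᵀ)) := by
      have : (Unew - Uold)ᵀ = Unewᵀ - Uoldᵀ := transpose_sub _ _
      rw [this, Matrix.sub_mul, trace_sub, tr_new]
      linarith [tr_old]
    have := Finset.sum_le_sum fun k (_ : k ∈ Finset.univ) => step1 k
    rw [Finset.sum_add_distrib, ← Finset.mul_sum, sum_step] at this
    linarith
  calc ∑ k, frobSq (A k - Unew * Matrix.diagonal (Λ k) * Unewᵀ)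
      = ∑ k, (Matrix.trace ((A k)ᵀ * A k)
          - 2 * Matrix.trace (Unewᵀ * A k * Unew * Matrix.diagonal (Λ k))
          + Matrix.trace (Matrix.diagonal (Λ k) * Matrix.diagonal (Λ k))) :=
        Finset.sum_congr rfl fun k _ => hexp_new k
    _ ≤ ∑ k, (Matrix.trace ((A k)ᵀ * A k)
          - 2 * Matrix.trace (Uoldᵀ * A k * Uold * Matrix.diagonal (Λ k))
          + Matrix.trace (Matrix.diagonal (Λ k) * Matrix.diagonal (Λ k))) := by
        simp only [Finset.sum_add_distrib, Finset.sum_sub_distrib, ← Finset.mul_sum]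
        linarith [main]
    _ = ∑ k, frobSq (A k - Uold * Matrix.diagonal (Λ k) * Uoldᵀ) :=
        (Finset.sum_congr rfl fun k _ => hexp_old k).symm
end

section
/- Let $A$ be a symmetric $n\times n$ real matrix. If $(\hat{U},\hat{\Lambda})$ solves $\min \|A_+ - U\Lambda U^T\|_F^2$ over $n\times d$ matrices $U$ with $U^TU=I_d$ and diagonal $\Lambda$ with nonnegative entries (where $A_+$ is the positive part of $A$), and $\hat{X} = \hat{U}\hat{\Lambda}^{1/2}$, then $\hat{X}$ also solves $\min_{X\in\mathbb{R}^{n\times d}} \|A - XX^T\|_F^2$. -/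
open Matrix

lemma star_eq_transpose' {n d : ℕ} (M : Matrix (Fin n) (Fin d) ℝ) : Mᴴ = Mᵀ := by
  ext i j; simp [Matrix.conjTranspose_apply]

lemma frobSq_sub {n : ℕ} (M N : Matrix (Fin n) (Fin n) ℝ) :
    frobSq (M - N) = frobSq M - 2 * Matrix.trace (Mᵀ * N) + frobSq N := by
  simp only [frobSq, transpose_sub, sub_mul, mul_sub, trace_sub]
  have h : Matrix.trace (Nᵀ * M) = Matrix.trace (Mᵀ * N) := by
    rw [← Matrix.trace_transpose (Nᵀ * M), transpose_mul, transpose_transpose]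
  rw [h]; ring

lemma frobSq_diag {n : ℕ} (e : Fin n → ℝ) : frobSq (Matrix.diagonal e) = ∑ i, (e i)^2 := by
  rw [frobSq, Matrix.diagonal_transpose, Matrix.diagonal_mul_diagonal, Matrix.trace_diagonal]
  exact Finset.sum_congr rfl fun i _ => (sq (e i)).symm

lemma trace_diag_mul {n : ℕ} (e : Fin n → ℝ) (B : Matrix (Fin n) (Fin n) ℝ) :
    Matrix.trace (Matrix.diagonal e * B) = ∑ i, e i * B i i := by
  simp [Matrix.trace, Matrix.diag, Matrix.diagonal_mul]

lemma frobSq_sandwich {n d : ℕ} (U : Matrix (Fin n) (Fin d) ℝ) (Λ : Fin d → ℝ)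
    (hU : Uᵀ * U = 1) : frobSq (U * Matrix.diagonal Λ * Uᵀ) = ∑ j, (Λ j)^2 := by
  have ht : (U * Matrix.diagonal Λ * Uᵀ)ᵀ = U * Matrix.diagonal Λ * Uᵀ := by
    simp [transpose_mul, Matrix.diagonal_transpose, Matrix.mul_assoc]
  rw [frobSq, ht]
  have : (U * Matrix.diagonal Λ * Uᵀ) * (U * Matrix.diagonal Λ * Uᵀ)
      = U * (Matrix.diagonal Λ * Matrix.diagonal Λ) * Uᵀ := by
    rw [Matrix.mul_assoc (U * Matrix.diagonal Λ) Uᵀ,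
      ← Matrix.mul_assoc Uᵀ (U * Matrix.diagonal Λ) Uᵀ, ← Matrix.mul_assoc Uᵀ U, hU,
      Matrix.one_mul, ← Matrix.mul_assoc, Matrix.mul_assoc U]
  rw [this, Matrix.trace_mul_cycle, ← Matrix.mul_assoc, hU, Matrix.one_mul,
    Matrix.diagonal_mul_diagonal, Matrix.trace_diagonal]
  exact Finset.sum_congr rfl fun j _ => (sq (Λ j)).symm

lemma trace_diag_sandwich {n d : ℕ} (e : Fin n → ℝ) (Z : Matrix (Fin n) (Fin d) ℝ)
    (Λ : Fin d → ℝ) :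
    Matrix.trace (Matrix.diagonal e * (Z * Matrix.diagonal Λ * Zᵀ))
      = ∑ j, Λ j * (∑ i, e i * (Z i j)^2) := by
  rw [trace_diag_mul]
  have hB : ∀ i, (Z * Matrix.diagonal Λ * Zᵀ) i i = ∑ j, Λ j * (Z i j)^2 := by
    intro i
    rw [Matrix.mul_apply]
    simp only [Matrix.mul_diagonal, Matrix.transpose_apply]
    exact Finset.sum_congr rfl fun j _ => by ring
  simp only [hB, Finset.mul_sum]
  rw [Finset.sum_comm]
  exact Finset.sum_congr rfl fun j _ => Finset.sum_congr rfl fun i _ => by ring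

lemma frobSq_conj {n : ℕ} (V M : Matrix (Fin n) (Fin n) ℝ)
    (hV' : V * Vᵀ = 1) :
    frobSq (Vᵀ * M * V) = frobSq M := by
  rw [frobSq, frobSq, transpose_mul, transpose_mul, transpose_transpose]
  simp only [← Matrix.mul_assoc]
  rw [Matrix.mul_assoc (Vᵀ * Mᵀ) V Vᵀ, hV', Matrix.mul_one,
    Matrix.trace_mul_comm, ← Matrix.mul_assoc V (Vᵀ * Mᵀ) M, ← Matrix.mul_assoc V Vᵀ Mᵀ, hV',
    Matrix.one_mul, Matrix.trace_mul_comm]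

lemma exists_topset {n : ℕ} (w : Fin n → ℝ) :
    ∀ d : ℕ, d ≤ n → ∃ T : Finset (Fin n), T.card = d ∧ ∀ i ∉ T, ∀ j ∈ T, w i ≤ w j := by
  intro d
  induction d with
  | zero => exact fun _ => ⟨∅, rfl, by simp⟩
  | succ d ih =>
    intro hd
    obtain ⟨T, hc, hp⟩ := ih (Nat.le_of_succ_le hd)
    have hne : (Finset.univ \ T).Nonempty := by
      rw [← Finset.card_pos, Finset.card_sdiff_of_subset (Finset.subset_univ T)]
      simp only [Finset.card_univ, Fintype.card_fin]
      omega
    obtain ⟨a, ha, hmax⟩ := Finset.exists_max_image (Finset.univ \ T) w hne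
    refine ⟨insert a T, ?_, ?_⟩
    · rw [Finset.card_insert_of_notMem (by simpa using (Finset.mem_sdiff.mp ha).2), hc]
    · intro i hi j hj
      have hiT : i ∉ T := fun h => hi (Finset.mem_insert_of_mem h)
      rcases Finset.mem_insert.mp hj with rfl | hjT
      · exact hmax i (Finset.mem_sdiff.mpr ⟨Finset.mem_univ i, hiT⟩)
      · exact hp i hiT j hjT

lemma exchange {n d : ℕ} (w c : Fin n → ℝ) (T : Finset (Fin n)) (hcard : T.card = d)
    (hw : ∀ i, 0 ≤ w i) (hT : ∀ i ∉ T, ∀ j ∈ T, w i ≤ w j)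
    (hc0 : ∀ i, 0 ≤ c i) (hc1 : ∀ i, c i ≤ 1) (hsum : ∑ i, c i ≤ (d : ℝ)) :
    ∑ i, w i * c i ≤ ∑ i ∈ T, w i := by
  rcases T.eq_empty_or_nonempty with rfl | hTne
  · simp only [Finset.card_empty] at hcard
    subst hcard
    have : ∀ i ∈ Finset.univ, c i = 0 := by
      intro i _
      have h1 : ∑ i, c i ≤ 0 := by simpa using hsum
      have h2 : (0:ℝ) ≤ ∑ i, c i := Finset.sum_nonneg fun i _ => hc0 i
      have := (Finset.sum_eq_zero_iff_of_nonneg (fun i _ => hc0 i)).mp (le_antisymm h1 h2)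
      exact this i (Finset.mem_univ i)
    calc ∑ i, w i * c i = ∑ i : Fin n, (0:ℝ) :=
          Finset.sum_congr rfl fun i hi => by rw [this i hi, mul_zero]
      _ ≤ _ := by simp
  · obtain ⟨a, haT, hmin⟩ := Finset.exists_min_image T w hTne
    set m := w a with hm
    have hm0 : 0 ≤ m := hw a
    have hsplit : ∑ i, w i * c i = ∑ i ∈ T, w i * c i + ∑ i ∈ Finset.univ \ T, w i * c i := by
      rw [← Finset.sum_sdiff (Finset.subset_univ T)]; ring
    have hcsplit : ∑ i ∈ Finset.univ \ T, c i = ∑ i, c i - ∑ i ∈ T, c i :=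
      Finset.sum_sdiff_eq_sub (Finset.subset_univ T)
    have h1 : ∑ i ∈ Finset.univ \ T, w i * c i ≤ m * ∑ i ∈ Finset.univ \ T, c i := by
      rw [Finset.mul_sum]
      refine Finset.sum_le_sum fun i hi => ?_
      have hiT : i ∉ T := (Finset.mem_sdiff.mp hi).2
      exact mul_le_mul_of_nonneg_right (hT i hiT a haT) (hc0 i)
    have h2 : m * ∑ i ∈ Finset.univ \ T, c i ≤ m * ((d:ℝ) - ∑ i ∈ T, c i) := by
      apply mul_le_mul_of_nonneg_left _ hm0
      rw [hcsplit]; linarith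
    have h3 : m * ((d:ℝ) - ∑ i ∈ T, c i) = ∑ i ∈ T, m * (1 - c i) := by
      have hcd : ∑ i ∈ T, (1:ℝ) = (d:ℝ) := by
        rw [Finset.sum_const, hcard]; simp
      rw [← hcd, ← Finset.sum_sub_distrib, Finset.mul_sum]
    have h4 : ∑ i ∈ T, m * (1 - c i) ≤ ∑ i ∈ T, w i * (1 - c i) := by
      refine Finset.sum_le_sum fun i hi => ?_
      exact mul_le_mul_of_nonneg_right (hmin i hi) (by linarith [hc1 i])
    have h5 : ∑ i ∈ T, w i * (1 - c i) = ∑ i ∈ T, w i - ∑ i ∈ T, w i * c i := by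
      rw [← Finset.sum_sub_distrib]
      exact Finset.sum_congr rfl fun i _ => by ring
    linarith

lemma hexp_lemma {n d : ℕ} (V : Matrix (Fin n) (Fin n) ℝ)
    (hV : Vᵀ * V = 1) (hV' : V * Vᵀ = 1) (e : Fin n → ℝ)
    (U : Matrix (Fin n) (Fin d) ℝ) (Λ : Fin d → ℝ) (hU : Uᵀ * U = 1) :
    frobSq (V * Matrix.diagonal e * Vᵀ - U * Matrix.diagonal Λ * Uᵀ)
      = (∑ i, (e i)^2) - 2 * ∑ j, Λ j * (∑ i, e i * ((Vᵀ * U) i j)^2) + ∑ j, (Λ j)^2 := by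
  set Z := Vᵀ * U with hZdef
  have hZ : Zᵀ * Z = 1 := by
    rw [hZdef, transpose_mul, transpose_transpose, Matrix.mul_assoc,
      ← Matrix.mul_assoc V Vᵀ U, hV', Matrix.one_mul, hU]
  have hconj : Vᵀ * (V * Matrix.diagonal e * Vᵀ - U * Matrix.diagonal Λ * Uᵀ) * V
      = Matrix.diagonal e - Z * Matrix.diagonal Λ * Zᵀ := by
    rw [Matrix.mul_sub, Matrix.sub_mul]
    congr 1
    · rw [← Matrix.mul_assoc, ← Matrix.mul_assoc, hV, Matrix.one_mul, Matrix.mul_assoc, hV,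
        Matrix.mul_one]
    · rw [hZdef, transpose_mul, transpose_transpose]
      simp only [Matrix.mul_assoc]
  calc frobSq (V * Matrix.diagonal e * Vᵀ - U * Matrix.diagonal Λ * Uᵀ)
      = frobSq (Vᵀ * (V * Matrix.diagonal e * Vᵀ - U * Matrix.diagonal Λ * Uᵀ) * V) :=
        (frobSq_conj V _ hV').symm
    _ = frobSq (Matrix.diagonal e - Z * Matrix.diagonal Λ * Zᵀ) := by rw [hconj]
    _ = _ := by
        rw [frobSq_sub, frobSq_diag, Matrix.diagonal_transpose, trace_diag_sandwich,
          frobSq_sandwich Z Λ hZ]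
set_option maxHeartbeats 2000000 in
theorem stmt_14 (n d : ℕ)
    (A : Matrix (Fin n) (Fin n) ℝ)
    (hA : A.IsSymm)
    (V : Matrix (Fin n) (Fin n) ℝ) (D : Fin n → ℝ)
    (hV : Vᵀ * V = 1) (hV' : V * Vᵀ = 1)
    (hdecomp : A = V * Matrix.diagonal D * Vᵀ)
    (Aplus : Matrix (Fin n) (Fin n) ℝ)
    (hAplus : Aplus = V * Matrix.diagonal (fun i => max (D i) 0) * Vᵀ)
    (Uhat : Matrix (Fin n) (Fin d) ℝ) (Λhat : Fin d → ℝ)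
    (hUhat : Uhatᵀ * Uhat = 1) (hΛhat : ∀ j, 0 ≤ Λhat j)
    (hopt : ∀ (U : Matrix (Fin n) (Fin d) ℝ) (Λ : Fin d → ℝ),
      Uᵀ * U = 1 → (∀ j, 0 ≤ Λ j) →
      frobSq (Aplus - Uhat * Matrix.diagonal Λhat * Uhatᵀ) ≤
        frobSq (Aplus - U * Matrix.diagonal Λ * Uᵀ))
    (Xhat : Matrix (Fin n) (Fin d) ℝ)
    (hXhat : Xhat = Uhat * Matrix.diagonal (fun j => Real.sqrt (Λhat j))) :
    ∀ X : Matrix (Fin n) (Fin d) ℝ,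
      frobSq (A - Xhat * Xhatᵀ) ≤ frobSq (A - X * Xᵀ) := by
  intro X
  set l : Fin n → ℝ := fun i => max (D i) 0 with hl_def
  set mu : Fin n → ℝ := fun i => min (D i) 0 with hmu_def
  set w : Fin n → ℝ := fun i => (l i)^2 with hw_def
  have hl0 : ∀ i, 0 ≤ l i := fun i => le_max_right _ _
  have hw0 : ∀ i, 0 ≤ w i := fun i => sq_nonneg _
  have hml : ∀ i, mu i * l i = 0 := by
    intro i
    rcases le_total (D i) 0 with h | h
    · have : l i = 0 := max_eq_right h
      rw [this, mul_zero]
    · have : mu i = 0 := min_eq_right h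
      rw [this, zero_mul]
  have hDlm : ∀ i, D i = l i + mu i := by
    intro i; rw [hl_def, hmu_def]; simp [max_add_min]
  -- d ≤ n
  have hdn : d ≤ n := by
    have h1 : (1 : Matrix (Fin d) (Fin d) ℝ).rank = d := by
      rw [Matrix.rank_one, Fintype.card_fin]
    have h2 : (Uhatᵀ * Uhat).rank ≤ n := le_trans (Matrix.rank_mul_le_left _ _)
      (le_trans (Matrix.rank_le_width Uhatᵀ) le_rfl)
    rw [hUhat, h1] at h2
    exact h2
  obtain ⟨T, hTcard, hTtop⟩ := exists_topset w d hdn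
  -- Z
  set Z := Vᵀ * Uhat with hZdef
  have hZ : Zᵀ * Z = 1 := by
    rw [hZdef, transpose_mul, transpose_transpose, Matrix.mul_assoc,
      ← Matrix.mul_assoc V Vᵀ Uhat, hV', Matrix.one_mul, hUhat]
  have colZ : ∀ j, ∑ i, (Z i j)^2 = 1 := by
    intro j
    have h := congrFun (congrFun hZ j) j
    rw [Matrix.mul_apply] at h
    simp only [Matrix.transpose_apply, Matrix.one_apply_eq] at h
    rw [← h]
    exact Finset.sum_congr rfl fun i _ => sq (Z i j)
  set q : Fin d → ℝ := fun j => ∑ i, l i * (Z i j)^2 with hq_def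
  set m : Fin d → ℝ := fun j => ∑ i, mu i * (Z i j)^2 with hm_def
  have hq0 : ∀ j, 0 ≤ q j := fun j =>
    Finset.sum_nonneg fun i _ => mul_nonneg (hl0 i) (sq_nonneg _)
  -- expansion convenience
  have hexpA : ∀ (U : Matrix (Fin n) (Fin d) ℝ) (Λ : Fin d → ℝ), Uᵀ * U = 1 →
      frobSq (Aplus - U * Matrix.diagonal Λ * Uᵀ)
        = (∑ i, (l i)^2) - 2 * ∑ j, Λ j * (∑ i, l i * ((Vᵀ * U) i j)^2) + ∑ j, (Λ j)^2 := by
    intro U Λ hU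
    rw [hAplus]
    exact hexp_lemma V hV hV' l U Λ hU
  -- Step 1 : Λhat = q
  have hΛq : ∀ j, Λhat j = q j := by
    have h := hopt Uhat q hUhat hq0
    rw [hexpA Uhat Λhat hUhat, hexpA Uhat q hUhat] at h
    have hqq : ∑ j, q j * (∑ i, l i * (Z i j)^2) = ∑ j, (q j)^2 :=
      Finset.sum_congr rfl fun j _ => by rw [hq_def]; ring
    rw [← hZdef] at h
    rw [hqq] at h
    have key : ∑ j, (Λhat j - q j)^2 ≤ 0 := by
      have expand : ∑ j, (Λhat j - q j)^2
          = (∑ j, (Λhat j)^2) - 2*(∑ j, Λhat j * q j) + ∑ j, (q j)^2 := by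
        rw [Finset.mul_sum, ← Finset.sum_sub_distrib, ← Finset.sum_add_distrib]
        exact Finset.sum_congr rfl fun j _ => by ring
      have hΛsum : ∑ j, Λhat j * (∑ i, l i * (Z i j)^2) = ∑ j, Λhat j * q j :=
        Finset.sum_congr rfl fun j _ => by rw [hq_def]
      rw [hΛsum] at h
      rw [expand]; linarith
    intro j
    have hz : ∑ j, (Λhat j - q j)^2 = 0 :=
      le_antisymm key (Finset.sum_nonneg fun j _ => sq_nonneg _)
    have := (Finset.sum_eq_zero_iff_of_nonneg (fun j _ => sq_nonneg _)).mp hz j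
      (Finset.mem_univ j)
    have := (pow_eq_zero_iff (two_ne_zero)).mp this
    linarith [sub_eq_zero.mp this]
  -- Step 2 : competitor from top eigenvectors
  have hstep2 : ∑ i ∈ T, w i ≤ ∑ j, (q j)^2 := by
    set σ : Fin d → Fin n := fun j => ((T.orderIsoOfFin hTcard j : T) : Fin n) with hσ_def
    have hσinj : Function.Injective σ := fun a b h =>
      (T.orderIsoOfFin hTcard).injective (Subtype.ext h)
    have hσT : ∀ j, σ j ∈ T := fun j => (T.orderIsoOfFin hTcard j).2
    have himg : Finset.univ.image σ = T := by
      apply Finset.eq_of_subset_of_card_le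
      · intro x hx
        obtain ⟨j, _, rfl⟩ := Finset.mem_image.mp hx
        exact hσT j
      · rw [Finset.card_image_of_injective _ hσinj, Finset.card_univ, Fintype.card_fin, hTcard]
    set U' : Matrix (Fin n) (Fin d) ℝ := Matrix.of (fun i j => V i (σ j)) with hU'_def
    have hentry : ∀ (a : Fin n) (b : Fin n), ∑ i, V i a * V i b = (1 : Matrix (Fin n) (Fin n) ℝ) a b := by
      intro a b
      have h := congrFun (congrFun hV a) b
      rw [Matrix.mul_apply] at h
      simpa only [Matrix.transpose_apply] using h
    have hU' : U'ᵀ * U' = 1 := by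
      ext j k
      rw [Matrix.mul_apply]
      simp only [Matrix.transpose_apply, hU'_def, Matrix.of_apply]
      rw [hentry (σ j) (σ k)]
      by_cases hjk : j = k
      · subst hjk; simp [Matrix.one_apply]
      · rw [Matrix.one_apply_ne fun hc => hjk (hσinj hc), Matrix.one_apply_ne hjk]
    have hVU' : ∀ (i : Fin n) (j : Fin d), (Vᵀ * U') i j = if i = σ j then 1 else 0 := by
      intro i j
      rw [Matrix.mul_apply]
      simp only [Matrix.transpose_apply, hU'_def, Matrix.of_apply]
      rw [hentry i (σ j), Matrix.one_apply]
    have hq' : ∀ j, (∑ i, l i * ((Vᵀ * U') i j)^2) = l (σ j) := by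
      intro j
      have : ∀ i, l i * ((Vᵀ * U') i j)^2 = if i = σ j then l i else 0 := by
        intro i
        rw [hVU' i j]
        by_cases hi : i = σ j <;> simp [hi]
      simp only [this]
      simp [Finset.sum_ite_eq']
    have h := hopt U' (fun j => l (σ j)) hU' (fun j => hl0 (σ j))
    rw [hexpA Uhat Λhat hUhat, hexpA U' (fun j => l (σ j)) hU'] at h
    simp only [hq'] at h
    rw [← hZdef] at h
    have hΛsum : ∑ j, Λhat j * (∑ i, l i * (Z i j)^2) = ∑ j, (q j)^2 :=
      Finset.sum_congr rfl fun j _ => by rw [hΛq j, hq_def]; ring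
    have hΛsq : ∑ j, (Λhat j)^2 = ∑ j, (q j)^2 :=
      Finset.sum_congr rfl fun j _ => by rw [hΛq j]
    rw [hΛsum, hΛsq] at h
    have hTsum : ∑ j, (l (σ j))^2 = ∑ i ∈ T, w i := by
      rw [← himg, Finset.sum_image (fun a _ b _ hab => hσinj hab)]
    have hTsum2 : ∑ j, l (σ j) * l (σ j) = ∑ i ∈ T, w i := by
      rw [← hTsum]
      exact Finset.sum_congr rfl fun j _ => (sq (l (σ j))).symm
    rw [hTsum, hTsum2] at h
    linarith
  -- Step 3 : Cauchy-Schwarz slack is zero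
  have hs0 : ∀ j, (q j)^2 ≤ ∑ i, w i * (Z i j)^2 := by
    intro j
    have cs := Finset.sum_mul_sq_le_sq_mul_sq Finset.univ (fun i => l i * Z i j) (fun i => Z i j)
    have e1 : ∑ i, (l i * Z i j) * (Z i j) = q j :=
      Finset.sum_congr rfl fun i _ => by ring
    have e2 : ∑ i, (l i * Z i j)^2 = ∑ i, w i * (Z i j)^2 :=
      Finset.sum_congr rfl fun i _ => by rw [hw_def]; ring
    rw [e1, e2, colZ j, mul_one] at cs
    exact cs
  have hc1 : ∀ i, ∑ j, (Z i j)^2 ≤ 1 := by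
    intro i
    set N := Z * Zᵀ with hN_def
    have hNidem : N * N = N := by
      rw [hN_def, Matrix.mul_assoc, ← Matrix.mul_assoc Zᵀ Z Zᵀ, hZ, Matrix.one_mul]
    have hNsym : ∀ a b, N b a = N a b := by
      intro a b
      rw [hN_def, Matrix.mul_apply, Matrix.mul_apply]
      exact Finset.sum_congr rfl fun k _ => by simp [Matrix.transpose_apply]; ring
    have hNii : N i i = ∑ j, (Z i j)^2 := by
      rw [hN_def, Matrix.mul_apply]
      exact Finset.sum_congr rfl fun j _ => by simp [Matrix.transpose_apply, sq]
    have hsq : N i i = ∑ k, (N i k)^2 := by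
      conv_lhs => rw [← hNidem]
      rw [Matrix.mul_apply]
      exact Finset.sum_congr rfl fun k _ => by rw [hNsym i k]; ring
    have hself : (N i i)^2 ≤ ∑ k, (N i k)^2 :=
      Finset.single_le_sum (fun k _ => sq_nonneg (N i k)) (Finset.mem_univ i)
    have h0 : 0 ≤ N i i := by
      rw [hNii]; exact Finset.sum_nonneg fun j _ => sq_nonneg _
    nlinarith [hsq, hself, h0, hNii]
  have hcsum : ∑ i, ∑ j, (Z i j)^2 = (d:ℝ) := by
    rw [Finset.sum_comm]
    simp only [colZ]
    simp
  have hbig : ∑ i, w i * (∑ j, (Z i j)^2) ≤ ∑ i ∈ T, w i :=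
    exchange w (fun i => ∑ j, (Z i j)^2) T hTcard hw0 hTtop
      (fun i => Finset.sum_nonneg fun j _ => sq_nonneg _) hc1 (le_of_eq hcsum)
  have hswap : ∑ j, (∑ i, w i * (Z i j)^2) = ∑ i, w i * (∑ j, (Z i j)^2) := by
    rw [Finset.sum_comm]
    exact Finset.sum_congr rfl fun i _ => (Finset.mul_sum _ _ _).symm
  have hchain : ∑ j, (q j)^2 ≤ ∑ j, (∑ i, w i * (Z i j)^2) :=
    Finset.sum_le_sum fun j _ => hs0 j
  have hqT : ∑ j, (q j)^2 = ∑ i ∈ T, w i := by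
    have := hswap ▸ hchain
    linarith [hbig, hstep2, this]
  have hseq : ∀ j, ∑ i, w i * (Z i j)^2 = (q j)^2 := by
    have hzero : ∑ j, ((∑ i, w i * (Z i j)^2) - (q j)^2) = 0 := by
      rw [Finset.sum_sub_distrib, hswap]
      linarith [hbig, hstep2, hqT]
    intro j
    have := (Finset.sum_eq_zero_iff_of_nonneg
      (fun j _ => sub_nonneg.mpr (hs0 j))).mp hzero j (Finset.mem_univ j)
    linarith [this]
  -- Step 4 : q j * m j = 0
  have hqm : ∀ j, q j * m j = 0 := by
    intro j
    have hfac : ∀ i, (l i - q j) * Z i j = 0 := by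
      have hzero : ∑ i, ((l i - q j) * Z i j)^2 = 0 := by
        have expand : ∀ a : ℝ, ∑ i, ((l i - a) * Z i j)^2
            = (∑ i, w i * (Z i j)^2) - 2 * a * (∑ i, l i * (Z i j)^2)
              + a^2 * (∑ i, (Z i j)^2) := by
          intro a
          rw [Finset.mul_sum, Finset.mul_sum, ← Finset.sum_sub_distrib, ← Finset.sum_add_distrib]
          refine Finset.sum_congr rfl fun i _ => ?_
          rw [hw_def]; ring
        rw [expand (q j), colZ j]
        have h1 : ∑ i, l i * (Z i j)^2 = q j := rfl
        rw [h1, hseq j]; ring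
      intro i
      have := (Finset.sum_eq_zero_iff_of_nonneg (fun i _ => sq_nonneg _)).mp hzero i
        (Finset.mem_univ i)
      exact (pow_eq_zero_iff (two_ne_zero)).mp this
    have : ∀ i, q j * (mu i * (Z i j)^2) = 0 := by
      intro i
      have hlq : l i * Z i j = q j * Z i j := by
        have := hfac i; nlinarith [hfac i]
      have : q j * (mu i * (Z i j)^2) = (mu i * Z i j) * (q j * Z i j) := by ring
      rw [this, ← hlq]
      have : (mu i * Z i j) * (l i * Z i j) = (mu i * l i) * (Z i j)^2 := by ring
      rw [this, hml i, zero_mul]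
    calc q j * m j = ∑ i, q j * (mu i * (Z i j)^2) := by
          rw [hm_def, Finset.mul_sum]
      _ = 0 := by simp only [this]; simp
  -- LHS value
  have hXX : Xhat * Xhatᵀ = Uhat * Matrix.diagonal Λhat * Uhatᵀ := by
    have hdd : (Matrix.diagonal fun j => Real.sqrt (Λhat j))
        * (Matrix.diagonal fun j => Real.sqrt (Λhat j)) = Matrix.diagonal Λhat := by
      have hfn : (fun j => Real.sqrt (Λhat j) * Real.sqrt (Λhat j)) = Λhat :=
        funext fun j => Real.mul_self_sqrt (hΛhat j)
      rw [Matrix.diagonal_mul_diagonal, hfn]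
    rw [hXhat, transpose_mul, Matrix.diagonal_transpose,
      ← Matrix.mul_assoc (Uhat * Matrix.diagonal fun j => Real.sqrt (Λhat j)),
      Matrix.mul_assoc Uhat (Matrix.diagonal fun j => Real.sqrt (Λhat j)), hdd]
  -- LHS value
  have hLHS : frobSq (A - Xhat * Xhatᵀ) = (∑ i, (D i)^2) - ∑ i ∈ T, w i := by
    rw [hXX, hdecomp, hexp_lemma V hV hV' D Uhat Λhat hUhat, ← hZdef]
    have hr : ∀ j, (∑ i, D i * (Z i j)^2) = q j + m j := by
      intro j
      have h2 : q j + m j = ∑ i, (l i * (Z i j)^2 + mu i * (Z i j)^2) :=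
        (Finset.sum_add_distrib).symm
      rw [h2]
      exact Finset.sum_congr rfl fun i _ => by rw [hDlm i]; ring
    simp only [hr]
    have hmid : ∑ j, Λhat j * (q j + m j) = ∑ j, (q j)^2 := by
      refine Finset.sum_congr rfl fun j _ => ?_
      rw [hΛq j, mul_add, hqm j, add_zero, ← sq]
    have hsq2 : ∑ j, (Λhat j)^2 = ∑ j, (q j)^2 :=
      Finset.sum_congr rfl fun j _ => by rw [hΛq j]
    rw [hmid, hsq2, hqT]
    ring
  -- RHS bound
  have hRHS : (∑ i, (D i)^2) - ∑ i ∈ T, w i ≤ frobSq (A - X * Xᵀ) := by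
    set Y := Vᵀ * X with hYdef
    have hconjX : Vᵀ * (A - X * Xᵀ) * V = Matrix.diagonal D - Y * Yᵀ := by
      rw [Matrix.mul_sub, Matrix.sub_mul, hdecomp]
      congr 1
      · rw [← Matrix.mul_assoc, ← Matrix.mul_assoc, hV, Matrix.one_mul, Matrix.mul_assoc, hV,
          Matrix.mul_one]
      · rw [hYdef, transpose_mul, transpose_transpose]
        simp only [Matrix.mul_assoc]
    have hfr : frobSq (A - X * Xᵀ) = frobSq (Matrix.diagonal D - Y * Yᵀ) := by
      rw [← frobSq_conj V (A - X * Xᵀ) hV', hconjX]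
    set B := Y * Yᵀ with hBdef
    have hYH : Yᴴ = Yᵀ := star_eq_transpose' Y
    have hH : B.IsHermitian := by
      rw [hBdef, ← hYH]; exact Matrix.isHermitian_mul_conjTranspose_self Y
    have hPSD : B.PosSemidef := by
      rw [hBdef, ← hYH]; exact Matrix.posSemidef_self_mul_conjTranspose Y
    obtain ⟨ν, W, hν0, hW1, hW2, hspec, hJd'⟩ :
        ∃ (ν : Fin n → ℝ) (W : Matrix (Fin n) (Fin n) ℝ),
          (∀ k, 0 ≤ ν k) ∧ Wᵀ * W = 1 ∧ W * Wᵀ = 1 ∧ B = W * Matrix.diagonal ν * Wᵀ ∧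
          ((Finset.univ.filter (fun k => ν k ≠ 0)).card : ℝ) ≤ (d : ℝ) := by
      refine ⟨hH.eigenvalues, (hH.eigenvectorUnitary : Matrix (Fin n) (Fin n) ℝ),
        fun k => hPSD.eigenvalues_nonneg k, ?_, ?_, ?_, ?_⟩
      · have h := Matrix.mem_unitaryGroup_iff'.mp hH.eigenvectorUnitary.2
        rwa [Matrix.star_eq_conjTranspose, star_eq_transpose'] at h
      · have h := Matrix.mem_unitaryGroup_iff.mp hH.eigenvectorUnitary.2
        rwa [Matrix.star_eq_conjTranspose, star_eq_transpose'] at h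
      · have h := hH.spectral_theorem
        rw [Unitary.conjStarAlgAut_apply, Matrix.star_eq_conjTranspose, star_eq_transpose'] at h
        exact h
      · have hr1 : B.rank ≤ d := by
          rw [hBdef]
          exact le_trans (Matrix.rank_mul_le_left Y Yᵀ) (Matrix.rank_le_width Y)
        have hr2 : B.rank = (Finset.univ.filter (fun k => hH.eigenvalues k ≠ 0)).card := by
          rw [hH.rank_eq_card_non_zero_eigs]
          exact Fintype.card_subtype _
        rw [← hr2]
        exact_mod_cast hr1
    have colW : ∀ k, ∑ i, (W i k)^2 = 1 := by
      intro k
      have h := congrFun (congrFun hW1 k) k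
      rw [Matrix.mul_apply] at h
      simp only [Matrix.transpose_apply, Matrix.one_apply_eq] at h
      rw [← h]
      exact Finset.sum_congr rfl fun i _ => sq (W i k)
    have rowW : ∀ i, ∑ k, (W i k)^2 = 1 := by
      intro i
      have h := congrFun (congrFun hW2 i) i
      rw [Matrix.mul_apply] at h
      simp only [Matrix.transpose_apply, Matrix.one_apply_eq] at h
      rw [← h]
      exact Finset.sum_congr rfl fun k _ => sq (W i k)
    set p : Fin n → ℝ := fun k => ∑ i, l i * (W i k)^2 with hp_def
    have hBii : ∀ i, B i i = ∑ k, ν k * (W i k)^2 := by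
      intro i
      rw [hspec, Matrix.mul_apply]
      simp only [Matrix.mul_diagonal, Matrix.transpose_apply]
      exact Finset.sum_congr rfl fun k _ => by ring
    have hBii0 : ∀ i, 0 ≤ B i i := fun i => by
      rw [hBii i]
      exact Finset.sum_nonneg fun k _ => mul_nonneg (hν0 k) (sq_nonneg _)
    have hfrB : frobSq B = ∑ k, (ν k)^2 := by
      rw [hspec]; exact frobSq_sandwich W ν hW1
    have htr : ∑ i, D i * B i i ≤ ∑ k, ν k * p k := by
      have h1 : ∑ i, D i * B i i ≤ ∑ i, l i * B i i :=
        Finset.sum_le_sum fun i _ =>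
          mul_le_mul_of_nonneg_right (le_max_left _ _) (hBii0 i)
      have h2 : ∑ i, l i * B i i = ∑ k, ν k * p k := by
        have : ∀ i, l i * B i i = ∑ k, ν k * (l i * (W i k)^2) := by
          intro i
          rw [hBii i, Finset.mul_sum]
          exact Finset.sum_congr rfl fun k _ => by ring
        simp only [this]
        rw [Finset.sum_comm]
        exact Finset.sum_congr rfl fun k _ => by rw [hp_def, Finset.mul_sum]
      linarith
    set J : Finset (Fin n) := Finset.univ.filter (fun k => ν k ≠ 0) with hJ_def
    have hJd : (J.card : ℝ) ≤ (d : ℝ) := hJd'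
    have key1 : 2 * (∑ k, ν k * p k) - (∑ k, (ν k)^2) ≤ ∑ k ∈ J, (p k)^2 := by
      have hterm : ∀ k, 2 * (ν k * p k) - (ν k)^2 ≤ if ν k ≠ 0 then (p k)^2 else 0 := by
        intro k
        by_cases h : ν k = 0
        · simp [h]
        · simp only [h, if_pos, ne_eq, not_false_eq_true, if_true]
          nlinarith [sq_nonneg (p k - ν k)]
      calc 2 * (∑ k, ν k * p k) - (∑ k, (ν k)^2)
          = ∑ k, (2 * (ν k * p k) - (ν k)^2) := by
            rw [Finset.mul_sum, ← Finset.sum_sub_distrib]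
        _ ≤ ∑ k, (if ν k ≠ 0 then (p k)^2 else 0) := Finset.sum_le_sum fun k _ => hterm k
        _ = ∑ k ∈ J, (p k)^2 := (Finset.sum_filter _ _).symm
    have key2 : ∀ k, (p k)^2 ≤ ∑ i, w i * (W i k)^2 := by
      intro k
      have cs := Finset.sum_mul_sq_le_sq_mul_sq Finset.univ
        (fun i => l i * W i k) (fun i => W i k)
      have e1 : ∑ i, (l i * W i k) * (W i k) = p k :=
        Finset.sum_congr rfl fun i _ => by ring
      have e2 : ∑ i, (l i * W i k)^2 = ∑ i, w i * (W i k)^2 :=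
        Finset.sum_congr rfl fun i _ => by rw [hw_def]; ring
      rw [e1, e2, colW k, mul_one] at cs
      exact cs
    have key3 : ∑ k ∈ J, ∑ i, w i * (W i k)^2 = ∑ i, w i * (∑ k ∈ J, (W i k)^2) := by
      rw [Finset.sum_comm]
      exact Finset.sum_congr rfl fun i _ => (Finset.mul_sum _ _ _).symm
    have hc'1 : ∀ i, ∑ k ∈ J, (W i k)^2 ≤ 1 := by
      intro i
      calc ∑ k ∈ J, (W i k)^2 ≤ ∑ k, (W i k)^2 :=
            Finset.sum_le_sum_of_subset_of_nonneg (Finset.subset_univ J)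
              (fun k _ _ => sq_nonneg _)
        _ = 1 := rowW i
    have hc'sum : ∑ i, ∑ k ∈ J, (W i k)^2 = (J.card : ℝ) := by
      rw [Finset.sum_comm]
      simp only [colW]
      simp
    have exch : ∑ i, w i * (∑ k ∈ J, (W i k)^2) ≤ ∑ i ∈ T, w i :=
      exchange w (fun i => ∑ k ∈ J, (W i k)^2) T hTcard hw0 hTtop
        (fun i => Finset.sum_nonneg fun k _ => sq_nonneg _) hc'1
        (by rw [hc'sum]; exact hJd)
    have keyJ : ∑ k ∈ J, (p k)^2 ≤ ∑ i ∈ T, w i := by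
      calc ∑ k ∈ J, (p k)^2 ≤ ∑ k ∈ J, ∑ i, w i * (W i k)^2 :=
            Finset.sum_le_sum fun k _ => key2 k
        _ = ∑ i, w i * (∑ k ∈ J, (W i k)^2) := key3
        _ ≤ ∑ i ∈ T, w i := exch
    rw [hfr, frobSq_sub, frobSq_diag, Matrix.diagonal_transpose, trace_diag_mul]
    linarith [htr, key1, keyJ, hfrB]
  linarith [hLHS, hRHS]
end
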